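/- arXiv:2505.03504 — 2 statements merged into one kernel-verified Lean document; each statement's English description precedes it below -/
import Mathlib

section
/- Let T_S be a positive random variable with E[T_S] = 1 and finite variance σ_S². For n ≥ 1 define ζ⁽ⁿ⁾(θ) as the unique real solution of e^{−θ}·E[exp(−ζ⁽ⁿ⁾(θ)·min(T_S, n^{1/2}))] = 1. Then as n → ∞, for fixed θ, ζ⁽ⁿ⁾(n^{−1/2}θ) = −n^{−1/2}θ + (1/2)σ_S² n^{−1}θ² + o(n^{−1}θ²). -/
open MeasureTheory Filter

lemma auxNonneg {f f' : ℝ → ℝ} (hd : ∀ x, HasDerivAt f (f' x) x) (h0 : f 0 = 0)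
    (hf' : ∀ x, 0 ≤ x → 0 ≤ f' x) {x : ℝ} (hx : 0 ≤ x) : 0 ≤ f x := by
  have hmono : MonotoneOn f (Set.Ici (0:ℝ)) := by
    apply monotoneOn_of_deriv_nonneg (convex_Ici 0)
    · exact fun y _ => (hd y).continuousAt.continuousWithinAt
    · exact fun y _ => (hd y).differentiableAt.differentiableWithinAt
    · intro y hy
      rw [interior_Ici] at hy
      rw [(hd y).deriv]
      exact hf' y hy.le
  have := hmono (Set.self_mem_Ici) (Set.mem_Ici.2 hx) hx
  rwa [h0] at this

lemma exp_quad {x : ℝ} (hx : 0 ≤ x) : Real.exp (-x) ≤ 1 - x + x^2/2 := by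
  have h := auxNonneg (f := fun x => 1 - x + x^2/2 - Real.exp (-x))
    (f' := fun x => -1 + x + Real.exp (-x)) ?_ (by norm_num) ?_ hx
  · linarith
  · intro y
    have h1 : HasDerivAt (fun x : ℝ => Real.exp (-x)) (-Real.exp (-y)) y := by
      exact ((Real.hasDerivAt_exp (-y)).comp y ((hasDerivAt_id y).neg)).congr_deriv (by simp)
    have h2 : HasDerivAt (fun x : ℝ => 1 - x + x^2/2) (-1 + y) y := by
      have := (((hasDerivAt_id y).const_sub 1).add (((hasDerivAt_id y).pow 2).div_const 2))
      exact this.congr_deriv (by simp [id])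
    exact (h2.sub h1).congr_deriv (by ring)
  · intro y hy
    have := Real.add_one_le_exp (-y)
    linarith

lemma hasDeriv_expneg (y : ℝ) : HasDerivAt (fun x : ℝ => Real.exp (-x)) (-Real.exp (-y)) y := by
  exact ((Real.hasDerivAt_exp (-y)).comp y ((hasDerivAt_id y).neg)).congr_deriv (by simp)

lemma r_lb {x : ℝ} (hx : 0 ≤ x) : -(x^3/6) ≤ Real.exp (-x) - 1 + x - x^2/2 := by
  have h := auxNonneg (f := fun x => Real.exp (-x) - 1 + x - x^2/2 + x^3/6)
    (f' := fun x => -Real.exp (-x) + 1 - x + x^2/2) ?_ (by norm_num) ?_ hx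
  · linarith
  · intro y
    have h1 := hasDeriv_expneg y
    have h2 : HasDerivAt (fun x : ℝ => -(1:ℝ) + x - x^2/2 + x^3/6) (1 - y + y^2/2) y := by
      have := (((hasDerivAt_const y (-(1:ℝ))).add (hasDerivAt_id y)).sub
        (((hasDerivAt_id y).pow 2).div_const 2)).add (((hasDerivAt_id y).pow 3).div_const 6)
      exact this.congr_deriv (by simp [id]; try ring)
    have := h1.add h2
    have h3 : (fun x : ℝ => Real.exp (-x) + (-(1:ℝ) + x - x^2/2 + x^3/6)) =
        (fun x : ℝ => Real.exp (-x) - 1 + x - x^2/2 + x^3/6) := by funext x; ring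
    rw [← h3]
    exact this.congr_deriv (by ring)
  · intro y hy
    have := exp_quad hy
    linarith

lemma exp_lb1 {y : ℝ} (hy : 0 ≤ y) : 1 + y + y^2/2 ≤ Real.exp y := by
  have h := auxNonneg (f := fun x => Real.exp x - 1 - x - x^2/2)
    (f' := fun x => Real.exp x - 1 - x) ?_ (by norm_num) ?_ hy
  · linarith
  · intro y
    have := (((Real.hasDerivAt_exp y).sub (hasDerivAt_const y (1:ℝ))).sub
      (hasDerivAt_id y)).sub (((hasDerivAt_id y).pow 2).div_const 2)
    exact this.congr_deriv (by simp [id]; try ring)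
  · intro y hy
    have := Real.add_one_le_exp y
    linarith

lemma exp_sub_one_le {y : ℝ} (hy : 0 ≤ y) : Real.exp y - 1 ≤ y * Real.exp y := by
  have h := Real.add_one_le_exp (-y)
  have hp := (Real.exp_pos y).le
  have hinv : Real.exp (-y) * Real.exp y = 1 := by rw [← Real.exp_add]; simp
  nlinarith [mul_le_mul_of_nonneg_right h hp]

lemma exp_sub_quad {y : ℝ} (hy : 0 ≤ y) : Real.exp y - 1 - y ≤ y^2 * Real.exp y / 2 := by
  have h := auxNonneg (f := fun x => x^2 * Real.exp x / 2 - Real.exp x + 1 + x)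
    (f' := fun x => x * Real.exp x + x^2 * Real.exp x / 2 - Real.exp x + 1) ?_ (by norm_num) ?_ hy
  · linarith
  · intro y
    have h1 : HasDerivAt (fun x : ℝ => x^2 * Real.exp x)
        (2 * y * Real.exp y + y^2 * Real.exp y) y := by
      have := ((hasDerivAt_id y).pow 2).mul (Real.hasDerivAt_exp y)
      exact this.congr_deriv (by simp [id]; try ring)
    have := (((h1.div_const 2).sub (Real.hasDerivAt_exp y)).add
      (hasDerivAt_const y (1:ℝ))).add (hasDerivAt_id y)
    have h3 : (fun x : ℝ => x^2 * Real.exp x / 2 - Real.exp x + 1 + x) =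
        (fun x : ℝ => x^2 * Real.exp x / 2 - Real.exp x + 1 + x) := rfl
    exact this.congr_deriv (by simp [id]; try ring)
  · intro x hx
    have h4 := exp_sub_one_le hx
    have h5 := (Real.exp_pos x).le
    nlinarith [sq_nonneg x, mul_nonneg (mul_nonneg hx hx) h5]

lemma r_ub_neg {y : ℝ} (hy : 0 ≤ y) : Real.exp y - 1 - y - y^2/2 ≤ y^3 * Real.exp y / 6 := by
  have h := auxNonneg (f := fun x => x^3 * Real.exp x / 6 - Real.exp x + 1 + x + x^2/2)
    (f' := fun x => x^2 * Real.exp x / 2 + x^3 * Real.exp x / 6 - Real.exp x + 1 + x) ?_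
      (by norm_num) ?_ hy
  · linarith
  · intro y
    have h1 : HasDerivAt (fun x : ℝ => x^3 * Real.exp x)
        (3 * y^2 * Real.exp y + y^3 * Real.exp y) y := by
      have := ((hasDerivAt_id y).pow 3).mul (Real.hasDerivAt_exp y)
      exact this.congr_deriv (by simp [id]; try ring)
    have := ((((h1.div_const 6).sub (Real.hasDerivAt_exp y)).add
      (hasDerivAt_const y (1:ℝ))).add (hasDerivAt_id y)).add (((hasDerivAt_id y).pow 2).div_const 2)
    exact this.congr_deriv (by simp [id]; try ring)
  · intro x hx
    have h4 := exp_sub_quad hx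
    have h5 := (Real.exp_pos x).le
    nlinarith [mul_nonneg (mul_nonneg (mul_nonneg hx hx) hx) h5]

lemma rbound (x : ℝ) : |Real.exp (-x) - 1 + x - x^2/2| ≤ |x|^3 * Real.exp |x| / 6 := by
  rcases le_or_gt 0 x with hx | hx
  · rw [abs_of_nonneg hx]
    have h1 := exp_quad hx
    have h2 := r_lb hx
    have h3 : (1:ℝ) ≤ Real.exp x := Real.one_le_exp hx
    rw [abs_le]
    constructor
    · nlinarith [pow_nonneg hx 3]
    · nlinarith [pow_nonneg hx 3]
  · have hy : 0 ≤ -x := by linarith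
    rw [abs_of_neg hx]
    have h1 := exp_lb1 hy
    have h2 := r_ub_neg hy
    rw [abs_le]
    constructor
    · nlinarith
    · nlinarith

lemma exp_sub_one_abs (t : ℝ) : Real.exp t - 1 ≤ |t| * Real.exp |t| := by
  rcases le_or_gt 0 t with ht | ht
  · rw [abs_of_nonneg ht]; exact exp_sub_one_le ht
  · have : Real.exp t - 1 < 0 := by
      have := Real.exp_lt_one_iff.2 ht
      linarith
    have : 0 ≤ |t| * Real.exp |t| := mul_nonneg (abs_nonneg t) (Real.exp_pos _).le
    linarith

set_option maxHeartbeats 1000000 in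
theorem stmt7 {Ω : Type*} [MeasurableSpace Ω] (μ : Measure Ω) [IsProbabilityMeasure μ]
    (T : Ω → ℝ) (hTmeas : Measurable T) (hTpos : ∀ ω, 0 < T ω)
    (hTmean : ∫ ω, T ω ∂μ = 1)
    (σS : ℝ) (hσS : σS ^ 2 = ∫ ω, (T ω - 1) ^ 2 ∂μ)
    (hT2 : Integrable (fun ω => (T ω - 1) ^ 2) μ)
    (ζ : ℕ → ℝ → ℝ)
    (hζ : ∀ (n : ℕ) (θ : ℝ), 1 ≤ n →
      Real.exp (-θ) * ∫ ω, Real.exp (-(ζ n θ) * min (T ω) (Real.sqrt n)) ∂μ = 1)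
    (θ : ℝ) :
    Tendsto
      (fun n : ℕ =>
        (n : ℝ) *
          (ζ n (θ / Real.sqrt n) - (-(θ / Real.sqrt n)) - σS ^ 2 * θ ^ 2 / (2 * n)))
      atTop (nhds 0) := by
  set s : ℕ → ℝ := fun n => Real.sqrt n with hs_def
  set m : ℕ → Ω → ℝ := fun n ω => min (T ω) (s n) with hm_def
  set t : ℕ → ℝ := fun n => θ / s n with ht_def
  set z : ℕ → ℝ := fun n => ζ n (t n) with hz_def
  set A : ℕ → ℝ := fun n => ∫ ω, m n ω ∂μ with hA_def
  set B : ℕ → ℝ := fun n => ∫ ω, (m n ω)^2 ∂μ with hB_def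
  set E : ℕ → ℝ := fun n =>
    ∫ ω, (Real.exp (-z n * m n ω) - 1 + z n * m n ω - (z n * m n ω)^2/2) ∂μ with hE_def
  set ρ : ℕ → ℝ := fun n => Real.exp (t n) - 1 - t n - t n^2/2 with hρ_def
  -- basic facts
  have hs_nonneg : ∀ n, 0 ≤ s n := fun n => Real.sqrt_nonneg _
  have hss : ∀ n : ℕ, (n:ℝ) = s n * s n := fun n =>
    (Real.mul_self_sqrt (Nat.cast_nonneg n)).symm
  have hs_one : ∀ n : ℕ, 1 ≤ n → 1 ≤ s n := by
    intro n hn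
    have h1 : Real.sqrt 1 ≤ Real.sqrt n := Real.sqrt_le_sqrt (by exact_mod_cast hn)
    rwa [Real.sqrt_one] at h1
  have hsqrt_top : Tendsto Real.sqrt atTop atTop := by
    apply tendsto_atTop_atTop.2
    intro b
    refine ⟨b^2, fun a ha => ?_⟩
    calc b ≤ |b| := le_abs_self b
    _ = Real.sqrt (b^2) := (Real.sqrt_sq_eq_abs b).symm
    _ ≤ Real.sqrt a := Real.sqrt_le_sqrt ha
  have hs_atTop : Tendsto s atTop atTop := hsqrt_top.comp tendsto_natCast_atTop_atTop
  have ht0 : Tendsto t atTop (nhds 0) := tendsto_const_nhds.div_atTop hs_atTop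
  have hm_meas : ∀ n, Measurable (m n) := fun n => hTmeas.min measurable_const
  have hm_nonneg : ∀ n ω, 0 ≤ m n ω := fun n ω => le_min (hTpos ω).le (hs_nonneg n)
  have hm_le_T : ∀ n ω, m n ω ≤ T ω := fun n ω => min_le_left _ _
  have hm_le_s : ∀ n ω, m n ω ≤ s n := fun n ω => min_le_right _ _
  have hTint : Integrable T μ := by
    by_contra h
    rw [integral_undef h] at hTmean
    norm_num at hTmean
  have hT2int : Integrable (fun ω => T ω^2) μ := by
    have hfe : (fun ω => T ω^2) = fun ω => (T ω - 1)^2 + 2*T ω - 1 := funext fun ω => by ring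
    rw [hfe]
    exact (hT2.add (hTint.const_mul 2)).sub (integrable_const 1)
  have hmint : ∀ n, Integrable (m n) μ := by
    intro n
    refine hTint.mono' (hm_meas n).aestronglyMeasurable (ae_of_all _ fun ω => ?_)
    rw [Real.norm_eq_abs, abs_of_nonneg (hm_nonneg n ω)]
    exact hm_le_T n ω
  have hm2int : ∀ n, Integrable (fun ω => (m n ω)^2) μ := by
    intro n
    refine hT2int.mono' ((hm_meas n).pow_const 2).aestronglyMeasurable (ae_of_all _ fun ω => ?_)
    rw [Real.norm_eq_abs, abs_of_nonneg (sq_nonneg _)]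
    exact pow_le_pow_left₀ (hm_nonneg n ω) (hm_le_T n ω) 2
  have hexpint : ∀ (n : ℕ) (c : ℝ), Integrable (fun ω => Real.exp (c * m n ω)) μ := by
    intro n c
    refine (integrable_const (Real.exp (|c| * s n))).mono'
      (Real.measurable_exp.comp ((hm_meas n).const_mul c)).aestronglyMeasurable
      (ae_of_all _ fun ω => ?_)
    rw [Real.norm_eq_abs, abs_of_nonneg (Real.exp_pos _).le]
    apply Real.exp_le_exp.2
    have h1 : c * m n ω ≤ |c| * m n ω :=
      mul_le_mul_of_nonneg_right (le_abs_self c) (hm_nonneg n ω)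
    have h2 : |c| * m n ω ≤ |c| * s n :=
      mul_le_mul_of_nonneg_left (hm_le_s n ω) (abs_nonneg c)
    linarith
  have hpolyint : ∀ (n : ℕ) (c : ℝ),
      Integrable (fun ω => 1 - c * m n ω + c^2 * (m n ω)^2/2) μ := by
    intro n c
    have h1 : Integrable (fun ω => 1 - c * m n ω) μ :=
      (integrable_const 1).sub ((hmint n).const_mul c)
    have h2 : Integrable (fun ω => c^2 * (m n ω)^2/2) μ :=
      ((hm2int n).const_mul (c^2)).div_const 2
    exact h1.add h2
  have hone : ∫ (_ : Ω), (1:ℝ) ∂μ = 1 := by simp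
  have hlin : ∀ (n : ℕ) (c : ℝ), ∫ ω, (1 - c * m n ω) ∂μ = 1 - c * A n := by
    intro n c
    rw [integral_sub (integrable_const 1) ((hmint n).const_mul c), integral_const_mul, hone]
  have hpoly : ∀ (n : ℕ) (c : ℝ),
      ∫ ω, (1 - c * m n ω + c^2 * (m n ω)^2/2) ∂μ = 1 - c * A n + c^2 * B n/2 := by
    intro n c
    have h1 : Integrable (fun ω => 1 - c * m n ω) μ :=
      (integrable_const 1).sub ((hmint n).const_mul c)
    have h2 : Integrable (fun ω => c^2 * (m n ω)^2/2) μ :=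
      ((hm2int n).const_mul (c^2)).div_const 2
    rw [integral_add h1 h2, hlin n c]
    have h3 : ∫ ω, c^2 * (m n ω)^2/2 ∂μ = c^2 * B n / 2 := by
      rw [integral_div, integral_const_mul]
    rw [h3]
  have hEint : ∀ n, Integrable
      (fun ω => Real.exp (-z n * m n ω) - 1 + z n * m n ω - (z n * m n ω)^2/2) μ := by
    intro n
    have hlast : Integrable (fun ω => (z n * m n ω)^2/2) μ := by
      have h0 : Integrable (fun ω => z n^2 * (m n ω)^2/2) μ :=
        ((hm2int n).const_mul (z n^2)).div_const 2
      exact h0.congr (ae_of_all _ fun ω => by ring)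
    have h1 : Integrable (fun ω => Real.exp (-z n * m n ω)) μ := hexpint n (-z n)
    have h2 : Integrable (fun ω => Real.exp (-z n * m n ω) - 1) μ := h1.sub (integrable_const 1)
    have h3 : Integrable (fun ω => Real.exp (-z n * m n ω) - 1 + z n * m n ω) μ :=
      h2.add ((hmint n).const_mul (z n))
    exact h3.sub hlast
  have heq : ∀ n, 1 ≤ n → ∫ ω, Real.exp (-z n * m n ω) ∂μ = Real.exp (t n) := by
    intro n hn
    have h := hζ n (t n) hn
    rw [Real.exp_neg] at h
    exact ((inv_mul_eq_one₀ (Real.exp_ne_zero _)).mp h).symm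
  have hEsplit : ∀ n, 1 ≤ n → Real.exp (t n) = 1 - z n * A n + z n^2 * B n/2 + E n := by
    intro n hn
    have e0 : (fun ω => Real.exp (-z n * m n ω)) = fun ω =>
        (1 - z n * m n ω + z n^2 * (m n ω)^2/2) +
          (Real.exp (-z n * m n ω) - 1 + z n * m n ω - (z n * m n ω)^2/2) :=
      funext fun ω => by ring
    have e1 := integral_add (μ := μ) (hpolyint n (z n)) (hEint n)
    rw [← heq n hn, e0, e1, hpoly n (z n)]
  have hA_le_one : ∀ n, A n ≤ 1 := by
    intro n
    rw [← hTmean]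
    exact integral_mono (hmint n) hTint (fun ω => hm_le_T n ω)
  have hσ_nonneg : 0 ≤ σS^2 := by
    rw [hσS]; exact integral_nonneg fun ω => sq_nonneg _
  -- L1
  have hL1 : Tendsto (fun n => s n * (1 - A n)) atTop (nhds 0) := by
    have hmeas1 : ∀ᶠ (n:ℕ) in atTop,
        AEStronglyMeasurable (fun ω => s n * (T ω - m n ω)) μ :=
      Eventually.of_forall fun n =>
        (((hTmeas.sub (hm_meas n)).const_mul (s n))).aestronglyMeasurable
    have hbound1 : ∀ᶠ (n:ℕ) in atTop,
        ∀ᵐ ω ∂μ, ‖s n * (T ω - m n ω)‖ ≤ T ω^2 := by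
      refine Eventually.of_forall fun n => ae_of_all _ fun ω => ?_
      rcases le_or_gt (T ω) (s n) with h | h
      · rw [show m n ω = T ω from min_eq_left h]
        simp [sq_nonneg]
      · rw [show m n ω = s n from min_eq_right h.le, Real.norm_eq_abs,
          abs_of_nonneg (mul_nonneg (hs_nonneg n) (by linarith))]
        nlinarith [sq_nonneg (T ω - s n), mul_nonneg (hs_nonneg n) (hTpos ω).le]
    have hlim1 : ∀ᵐ ω ∂μ, Tendsto (fun n : ℕ => s n * (T ω - m n ω)) atTop (nhds 0) := by
      refine ae_of_all _ fun ω => ?_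
      refine Tendsto.congr' ?_ tendsto_const_nhds
      filter_upwards [hs_atTop.eventually_ge_atTop (T ω)] with n hn
      rw [show m n ω = T ω from min_eq_left hn]
      ring
    have hDCT := tendsto_integral_filter_of_dominated_convergence (μ := μ)
      (f := fun _ => (0:ℝ)) (bound := fun ω => T ω^2) hmeas1 hbound1 hT2int hlim1
    rw [integral_zero] at hDCT
    refine hDCT.congr fun n => ?_
    rw [integral_const_mul, integral_sub hTint (hmint n), hTmean]
  -- L2
  have hA1 : Tendsto A atTop (nhds 1) := by
    have h0 : Tendsto (fun n => 1 - A n) atTop (nhds 0) := by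
      refine squeeze_zero_norm' ?_ hL1
      filter_upwards [eventually_ge_atTop 1] with n hn
      rw [Real.norm_eq_abs, abs_of_nonneg (by linarith [hA_le_one n])]
      nlinarith [hs_one n hn, hA_le_one n]
    have h1 : Tendsto (fun n : ℕ => 1 - (1 - A n)) atTop (nhds (1 - 0)) :=
      tendsto_const_nhds.sub h0
    simpa using h1
  -- L3
  have hT2val : ∫ ω, T ω^2 ∂μ = σS^2 + 1 := by
    have hI1 : Integrable (fun ω => T ω^2 - 2*T ω) μ := hT2int.sub (hTint.const_mul 2)
    have e0 : (fun ω => (T ω - 1)^2) = fun ω => T ω^2 - 2*T ω + 1 := funext fun ω => by ring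
    rw [e0] at hσS
    rw [integral_add hI1 (integrable_const 1),
      integral_sub hT2int (hTint.const_mul 2), integral_const_mul, hTmean, hone] at hσS
    linarith
  have hBlim : Tendsto B atTop (nhds (σS^2 + 1)) := by
    have hmeas2 : ∀ᶠ (n:ℕ) in atTop, AEStronglyMeasurable (fun ω => (m n ω)^2) μ :=
      Eventually.of_forall fun n => ((hm_meas n).pow_const 2).aestronglyMeasurable
    have hbound2 : ∀ᶠ (n:ℕ) in atTop, ∀ᵐ ω ∂μ, ‖(m n ω)^2‖ ≤ T ω^2 := by
      refine Eventually.of_forall fun n => ae_of_all _ fun ω => ?_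
      rw [Real.norm_eq_abs, abs_of_nonneg (sq_nonneg _)]
      exact pow_le_pow_left₀ (hm_nonneg n ω) (hm_le_T n ω) 2
    have hlim2 : ∀ᵐ ω ∂μ, Tendsto (fun n : ℕ => (m n ω)^2) atTop (nhds (T ω^2)) := by
      refine ae_of_all _ fun ω => ?_
      refine Tendsto.congr' ?_ tendsto_const_nhds
      filter_upwards [hs_atTop.eventually_ge_atTop (T ω)] with n hn
      rw [show m n ω = T ω from min_eq_left hn]
    have hDCT := tendsto_integral_filter_of_dominated_convergence (μ := μ)
      (f := fun ω => T ω^2) (bound := fun ω => T ω^2) hmeas2 hbound2 hT2int hlim2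
    rw [hT2val] at hDCT
    exact hDCT
  -- eventual bounds
  set ε : ℝ := 1/(16*(σS^2+2)) with hε_def
  have hε : 0 < ε := by rw [hε_def]; positivity
  have hεone : ε ≤ 1 := by
    rw [hε_def, div_le_one (by positivity)]
    nlinarith
  have ht_ev : ∀ᶠ (n:ℕ) in atTop, |t n| ≤ ε := by
    have h := Metric.tendsto_nhds.mp ht0 ε hε
    filter_upwards [h] with n hn
    rw [Real.dist_eq, sub_zero] at hn
    exact hn.le
  have hA_ev : ∀ᶠ (n:ℕ) in atTop, 1/2 ≤ A n :=
    hA1.eventually (eventually_ge_nhds (by norm_num))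
  have hB_lb : ∀ᶠ (n:ℕ) in atTop, 1/2 ≤ B n :=
    hBlim.eventually (eventually_ge_nhds (by nlinarith))
  have hB_ub : ∀ᶠ (n:ℕ) in atTop, B n ≤ σS^2 + 2 :=
    hBlim.eventually (eventually_le_nhds (by nlinarith))
  have hexp3 : ∀ x : ℝ, |x| ≤ 1 → Real.exp |x| ≤ 3 := by
    intro x hx
    calc Real.exp |x| ≤ Real.exp 1 := Real.exp_le_exp.2 hx
    _ ≤ 3 := by nlinarith [Real.exp_one_lt_d9]
  -- a priori bound |z| ≤ 6|t|
  have hzb : ∀ᶠ (n:ℕ) in atTop, |z n| ≤ 6 * |t n| := by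
    filter_upwards [hA_ev, hB_lb, hB_ub, ht_ev, eventually_ge_atTop 1]
      with n hA2 hB2 hBu htt hn
    have heqn := heq n hn
    have hApos : (0:ℝ) < A n := by linarith
    have hBpos : (0:ℝ) < B n := by linarith
    have h1le : 1 - z n * A n ≤ Real.exp (t n) := by
      rw [← heqn, ← hlin n (z n)]
      refine integral_mono ((integrable_const 1).sub ((hmint n).const_mul (z n)))
        (hexpint n (-z n)) fun ω => ?_
      have h2 := Real.add_one_le_exp (-z n * m n ω)
      simp only [Pi.sub_apply]
      linarith
    have hup : ∀ c : ℝ, 0 ≤ c →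
        ∫ ω, Real.exp (-c * m n ω) ∂μ ≤ 1 - c * A n + c^2 * B n/2 := by
      intro c hc
      rw [← hpoly n c]
      refine integral_mono (hexpint n (-c)) (hpolyint n c) fun ω => ?_
      have hcm : 0 ≤ c * m n ω := mul_nonneg hc (hm_nonneg n ω)
      have h2 := exp_quad hcm
      simp only []
      rw [neg_mul]
      nlinarith [h2]
    have hexpt_lb : 1 + t n ≤ Real.exp (t n) := by linarith [Real.add_one_le_exp (t n)]
    rcases lt_or_ge (z n) 0 with hzneg | hznn
    · have h2 : -(z n * A n) ≤ Real.exp (t n) - 1 := by linarith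
      have h3 := exp_sub_one_abs (t n)
      have h4 : Real.exp |t n| ≤ 3 := hexp3 _ (le_trans htt hεone)
      rw [abs_of_neg hzneg]
      have h6 : |t n| * Real.exp |t n| ≤ 3 * |t n| := by nlinarith [abs_nonneg (t n)]
      nlinarith [mul_nonneg (neg_nonneg.2 hzneg.le) (by linarith : (0:ℝ) ≤ A n - 1/2)]
    · have hzAB : z n ≤ A n / B n := by
        by_contra hgt
        push_neg at hgt
        have hcnn : (0:ℝ) ≤ A n / B n := div_nonneg hApos.le hBpos.le
        have hmono2 : ∫ ω, Real.exp (-z n * m n ω) ∂μ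
            ≤ ∫ ω, Real.exp (-(A n/B n) * m n ω) ∂μ := by
          refine integral_mono (hexpint n (-z n)) (hexpint n (-(A n/B n))) fun ω => ?_
          simp only []
          apply Real.exp_le_exp.2
          have hm0 := hm_nonneg n ω
          nlinarith [hgt.le]
        have h5 := hup (A n/B n) hcnn
        have h7 : 1 - (A n/B n) * A n + (A n/B n)^2 * B n/2 = 1 - A n^2/(2*B n) := by
          field_simp
          ring
        have h6 : Real.exp (t n) ≤ 1 - A n^2/(2*B n) := by
          rw [← heqn, ← h7]
          exact le_trans hmono2 h5
        have h8 : -ε ≤ t n := by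
          have h9 := (abs_le.1 htt).1
          linarith
        have h9 : 2*ε ≤ A n^2/(2*B n) := by
          rw [le_div_iff₀ (by linarith : (0:ℝ) < 2*B n), hε_def]
          have hD : (0:ℝ) < σS^2+2 := by positivity
          have e2 : 2*(1/(16*(σS^2+2)))*(2*B n) = (B n/(σS^2+2))/4 := by
            field_simp
            ring
          have hBD : B n/(σS^2+2) ≤ 1 := (div_le_one hD).2 hBu
          have hA4 : 1/4 ≤ A n^2 := by nlinarith
          rw [e2]
          linarith
        linarith [hexpt_lb]
      have h9 := hup (z n) hznn
      rw [heqn] at h9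
      have h11 : z n * B n ≤ A n := (le_div_iff₀ hBpos).1 hzAB
      have h10 : z n^2 * B n/2 ≤ z n * A n/2 := by nlinarith
      rw [abs_of_nonneg hznn]
      have h12 : -(t n) ≤ |t n| := neg_le_abs _
      nlinarith [mul_nonneg hznn (by linarith : (0:ℝ) ≤ A n - 1/2), abs_nonneg (t n)]
  have hzb_s : ∀ᶠ (n:ℕ) in atTop, |s n * z n| ≤ 6 * |θ| := by
    filter_upwards [hzb, eventually_ge_atTop 1] with n hb hn
    have hspos : (0:ℝ) < s n := by linarith [hs_one n hn]
    have hst : s n * |t n| = |θ| := by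
      rw [ht_def]
      simp only []
      rw [abs_div, abs_of_nonneg (hs_nonneg n)]
      field_simp
    rw [abs_mul, abs_of_nonneg (hs_nonneg n)]
    calc s n * |z n| ≤ s n * (6*|t n|) := mul_le_mul_of_nonneg_left hb (hs_nonneg n)
    _ = 6 * (s n * |t n|) := by ring
    _ = 6 * |θ| := by rw [hst]
  have hz0 : Tendsto z atTop (nhds 0) := by
    refine squeeze_zero_norm' (a := fun n : ℕ => 6 * |t n|) ?_ ?_
    · filter_upwards [hzb] with n h
      rwa [Real.norm_eq_abs]
    · have h1 : Tendsto (fun n => |t n|) atTop (nhds 0) := by simpa using ht0.abs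
      simpa using h1.const_mul 6
  have hnz2_ub : ∀ᶠ (n:ℕ) in atTop, (n:ℝ) * z n^2 ≤ 36*θ^2 := by
    filter_upwards [hzb_s] with n hb
    have h1 : (s n * z n)^2 ≤ (6*|θ|)^2 := by
      rw [← sq_abs (s n * z n)]
      exact pow_le_pow_left₀ (abs_nonneg _) hb 2
    calc (n:ℝ) * z n^2 = (s n * z n)^2 := by rw [hss n]; ring
    _ ≤ (6*|θ|)^2 := h1
    _ = 36*θ^2 := by rw [mul_pow, sq_abs]; norm_num
  -- n * E n → 0
  have hnE : Tendsto (fun n : ℕ => (n:ℝ) * E n) atTop (nhds 0) := by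
    have hrmeas : ∀ᶠ (n:ℕ) in atTop, AEStronglyMeasurable (fun ω =>
        (n:ℝ) * (Real.exp (-z n * m n ω) - 1 + z n * m n ω - (z n * m n ω)^2/2)) μ := by
      refine Eventually.of_forall fun n => Measurable.aestronglyMeasurable ?_
      have hg : Measurable (fun ω => z n * m n ω) := (hm_meas n).const_mul (z n)
      exact (((((Real.measurable_exp.comp ((hm_meas n).const_mul (-z n))).sub
        measurable_const).add hg).sub ((hg.pow_const 2).div_const 2)).const_mul _)
    have hbound : ∀ᶠ (n:ℕ) in atTop, ∀ᵐ ω ∂μ,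
        ‖(n:ℝ) * (Real.exp (-z n * m n ω) - 1 + z n * m n ω - (z n * m n ω)^2/2)‖
          ≤ 36*|θ|^3*Real.exp (6*|θ|)*T ω^2 := by
      filter_upwards [hzb_s, hnz2_ub] with n hb hnz
      refine ae_of_all _ fun ω => ?_
      have hm0 := hm_nonneg n ω
      have hmT := hm_le_T n ω
      have hx : |z n * m n ω| ≤ 6*|θ| := by
        rw [abs_mul]
        have h1 : |m n ω| ≤ s n := by
          rw [abs_of_nonneg hm0]; exact hm_le_s n ω
        calc |z n| * |m n ω| ≤ |z n| * s n := mul_le_mul_of_nonneg_left h1 (abs_nonneg _)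
        _ = |s n * z n| := by rw [abs_mul, abs_of_nonneg (hs_nonneg n)]; ring
        _ ≤ 6*|θ| := hb
      have hr := rbound (z n * m n ω)
      have hxe : Real.exp |z n * m n ω| ≤ Real.exp (6*|θ|) := Real.exp_le_exp.2 hx
      have hx2 : |z n * m n ω|^2 = z n^2 * (m n ω)^2 := by rw [sq_abs]; ring
      have hnx2 : (n:ℝ) * |z n * m n ω|^2 ≤ 36*θ^2 * T ω^2 := by
        rw [hx2]
        have hmm : (m n ω)^2 ≤ T ω^2 := pow_le_pow_left₀ hm0 hmT 2
        nlinarith [mul_le_mul_of_nonneg_right hnz (sq_nonneg (m n ω)),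
          mul_le_mul_of_nonneg_left hmm (by positivity : (0:ℝ) ≤ 36*θ^2)]
      rw [Real.norm_eq_abs, abs_mul, abs_of_nonneg (by positivity : (0:ℝ) ≤ (n:ℝ))]
      rw [show (-z n * m n ω) = -(z n * m n ω) from by ring]
      have habs := abs_nonneg (z n * m n ω)
      have c1 : |z n * m n ω|^3 ≤ |z n * m n ω|^2 * (6*|θ|) := by
        rw [pow_succ]
        exact mul_le_mul_of_nonneg_left hx (by positivity)
      have c3 : |z n * m n ω|^3 * Real.exp |z n * m n ω|
          ≤ (|z n * m n ω|^2*(6*|θ|)) * Real.exp (6*|θ|) :=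
        mul_le_mul c1 hxe (Real.exp_pos _).le (by positivity)
      calc (n:ℝ) * |Real.exp (-(z n * m n ω)) - 1 + z n * m n ω - (z n * m n ω)^2/2|
          ≤ (n:ℝ) * (|z n * m n ω|^3 * Real.exp |z n * m n ω| / 6) :=
            mul_le_mul_of_nonneg_left hr (by positivity)
      _ ≤ (n:ℝ) * ((|z n * m n ω|^2*(6*|θ|)) * Real.exp (6*|θ|) / 6) := by
            have := (by positivity : (0:ℝ) ≤ (n:ℝ))
            nlinarith [c3]
      _ = ((n:ℝ) * |z n * m n ω|^2) * (|θ| * Real.exp (6*|θ|)) := by ring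
      _ ≤ (36*θ^2 * T ω^2) * (|θ| * Real.exp (6*|θ|)) :=
            mul_le_mul_of_nonneg_right hnx2 (by positivity)
      _ = 36*|θ|^3*Real.exp (6*|θ|)*T ω^2 := by
            rw [show |θ|^3 = θ^2 * |θ| from by rw [pow_succ, sq_abs]]
            ring
    have hbint : Integrable (fun ω => 36*|θ|^3*Real.exp (6*|θ|)*T ω^2) μ := by
      have h := hT2int.const_mul (36*|θ|^3*Real.exp (6*|θ|))
      exact h.congr (ae_of_all _ fun ω => by ring)
    have hlim : ∀ᵐ ω ∂μ, Tendsto (fun n : ℕ =>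
        (n:ℝ) * (Real.exp (-z n * m n ω) - 1 + z n * m n ω - (z n * m n ω)^2/2))
        atTop (nhds 0) := by
      refine ae_of_all _ fun ω => ?_
      have hTnn := (hTpos ω).le
      refine squeeze_zero_norm' ?_ ?_
        (a := fun n => 6*θ^2*T ω^3 * (|z n| * Real.exp (|z n| * T ω)))
      · filter_upwards [hzb_s, hnz2_ub] with n hb hnz
        have hm0 := hm_nonneg n ω
        have hmT := hm_le_T n ω
        have hx : |z n * m n ω| ≤ |z n| * T ω := by
          rw [abs_mul]
          exact mul_le_mul_of_nonneg_left
            (by rw [abs_of_nonneg hm0]; exact hmT) (abs_nonneg _)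
        have hr := rbound (z n * m n ω)
        rw [Real.norm_eq_abs, abs_mul, abs_of_nonneg (by positivity : (0:ℝ) ≤ (n:ℝ))]
        rw [show (-z n * m n ω) = -(z n * m n ω) from by ring]
        have c1 : |z n * m n ω|^3 ≤ (|z n| * T ω)^3 :=
          pow_le_pow_left₀ (abs_nonneg _) hx 3
        have c2 : Real.exp |z n * m n ω| ≤ Real.exp (|z n| * T ω) := Real.exp_le_exp.2 hx
        have c3 : |z n * m n ω|^3 * Real.exp |z n * m n ω|
            ≤ (|z n| * T ω)^3 * Real.exp (|z n| * T ω) :=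
          mul_le_mul c1 c2 (Real.exp_pos _).le (by positivity)
        have c4 : (n:ℝ) * |z n|^3 ≤ 36*θ^2 * |z n| := by
          have e1 : (n:ℝ) * |z n|^3 = ((n:ℝ) * z n^2) * |z n| := by
            rw [show |z n|^3 = |z n|^2 * |z n| from by ring, sq_abs]; ring
          rw [e1]
          exact mul_le_mul_of_nonneg_right hnz (abs_nonneg _)
        calc (n:ℝ) * |Real.exp (-(z n * m n ω)) - 1 + z n * m n ω - (z n * m n ω)^2/2|
            ≤ (n:ℝ) * (|z n * m n ω|^3 * Real.exp |z n * m n ω| / 6) :=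
              mul_le_mul_of_nonneg_left hr (by positivity)
        _ ≤ (n:ℝ) * ((|z n| * T ω)^3 * Real.exp (|z n| * T ω) / 6) := by
              have := (by positivity : (0:ℝ) ≤ (n:ℝ))
              nlinarith [c3]
        _ = ((n:ℝ) * |z n|^3) * (T ω^3 * Real.exp (|z n| * T ω) / 6) := by ring
        _ ≤ (36*θ^2 * |z n|) * (T ω^3 * Real.exp (|z n| * T ω) / 6) := by
              refine mul_le_mul_of_nonneg_right c4 (by positivity)
        _ ≤ 6*θ^2*T ω^3 * (|z n| * Real.exp (|z n| * T ω)) := by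
              nlinarith [mul_nonneg (mul_nonneg (abs_nonneg (z n))
                (Real.exp_pos (|z n| * T ω)).le) (pow_nonneg hTnn 3), sq_nonneg θ]
      · have h0 : Tendsto (fun n : ℕ => |z n|) atTop (nhds 0) := by simpa using hz0.abs
        have he : Tendsto (fun n : ℕ => Real.exp (|z n| * T ω)) atTop (nhds 1) := by
          have h1 : Tendsto (fun n : ℕ => |z n| * T ω) atTop (nhds 0) := by
            simpa using h0.mul_const (T ω)
          have h2 := (Real.continuous_exp.tendsto 0).comp h1
          rw [Real.exp_zero] at h2; exact h2
        have hz' : Tendsto (fun n : ℕ => |z n| * Real.exp (|z n| * T ω)) atTop (nhds 0) := by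
          have := h0.mul he
          simpa using this
        have := hz'.const_mul (6*θ^2*T ω^3)
        simpa using this
    have hDCT := tendsto_integral_filter_of_dominated_convergence (μ := μ)
      (f := fun _ => (0:ℝ)) (bound := fun ω => 36*|θ|^3*Real.exp (6*|θ|)*T ω^2)
      hrmeas hbound hbint hlim
    rw [integral_zero] at hDCT
    refine hDCT.congr fun n => ?_
    exact integral_const_mul _ _
  -- n * ρ n → 0
  have hnρ : Tendsto (fun n : ℕ => (n:ℝ) * ρ n) atTop (nhds 0) := by
    refine squeeze_zero_norm' ?_ ?_ (a := fun n => |θ|^3 * (s n)⁻¹)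
    · filter_upwards [eventually_ge_atTop 1, ht_ev] with n hn htt
      have hs1 := hs_one n hn
      have hspos : (0:ℝ) < s n := by linarith
      have h2 := rbound (-t n)
      rw [show Real.exp (-(-t n)) - 1 + (-t n) - (-t n)^2/2 = ρ n from by
        rw [hρ_def]; simp only []; ring] at h2
      rw [abs_neg] at h2
      have htabs : |t n| = |θ| / s n := by
        rw [ht_def]
        simp only []
        rw [abs_div, abs_of_nonneg (hs_nonneg n)]
      have h4 : Real.exp |t n| ≤ 3 := hexp3 _ (le_trans htt hεone)
      rw [Real.norm_eq_abs, abs_mul, abs_of_nonneg (by positivity : (0:ℝ) ≤ (n:ℝ))]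
      calc (n:ℝ) * |ρ n| ≤ (n:ℝ) * (|t n|^3 * Real.exp |t n|/6) :=
            mul_le_mul_of_nonneg_left h2 (by positivity)
      _ ≤ (n:ℝ) * (|t n|^3 * 3/6) := by
            have h5 := pow_nonneg (abs_nonneg (t n)) 3
            have h6 := (by positivity : (0:ℝ) ≤ (n:ℝ))
            nlinarith [mul_le_mul_of_nonneg_left h4 h5]
      _ = |θ|^3 * (s n)⁻¹ / 2 := by
            rw [htabs, div_pow, hss n]
            field_simp
            ring
      _ ≤ |θ|^3 * (s n)⁻¹ := by
            have h7 : (0:ℝ) ≤ |θ|^3 * (s n)⁻¹ := by positivity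
            linarith
    · have h1 : Tendsto (fun n => (s n)⁻¹) atTop (nhds 0) :=
        tendsto_inv_atTop_zero.comp hs_atTop
      simpa using h1.const_mul (|θ|^3)
  -- s n * z n * A n → -θ
  have hid1 : ∀ᶠ (n:ℕ) in atTop, s n * z n * A n
      = -θ - θ^2/(2*s n) - s n * ρ n + s n * z n^2 * B n/2 + s n * E n := by
    filter_upwards [eventually_ge_atTop 1] with n hn
    have h := hEsplit n hn
    have hspos : (0:ℝ) < s n := by linarith [hs_one n hn]
    have hst : s n * t n = θ := by
      rw [ht_def]; simp only []; field_simp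
    have hst2 : s n * t n^2 = θ^2 / s n := by
      rw [ht_def]; simp only []; field_simp
    rw [hρ_def]; simp only []
    linear_combination (s n) * h - hst - (1/2) * hst2
  have hc1 : Tendsto (fun n => θ^2/(2*s n)) atTop (nhds 0) :=
    tendsto_const_nhds.div_atTop (hs_atTop.const_mul_atTop two_pos)
  have hsn_le : ∀ n : ℕ, 1 ≤ n → s n ≤ (n:ℝ) := by
    intro n hn
    have hs1 := hs_one n hn
    nlinarith [hss n]
  have hc2 : Tendsto (fun n => s n * ρ n) atTop (nhds 0) := by
    refine squeeze_zero_norm' ?_ (by have h := hnρ.abs; rwa [abs_zero] at h)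
    filter_upwards [eventually_ge_atTop 1] with n hn
    rw [Real.norm_eq_abs, abs_mul, abs_of_nonneg (hs_nonneg n)]
    calc s n * |ρ n| ≤ (n:ℝ)*|ρ n| :=
          mul_le_mul_of_nonneg_right (hsn_le n hn) (abs_nonneg _)
    _ = |(n:ℝ)*ρ n| := by rw [abs_mul, abs_of_nonneg (by positivity : (0:ℝ) ≤ (n:ℝ))]
  have hc3 : Tendsto (fun n => s n * z n^2 * B n/2) atTop (nhds 0) := by
    refine squeeze_zero_norm' ?_ ?_ (a := fun n => (6 * |θ| * (σS^2+2) / 2) * |z n|)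
    · filter_upwards [hzb_s, hB_lb, hB_ub] with n hb h1 h2
      have hBnn : (0:ℝ) ≤ B n := by linarith
      have e1 : s n * z n^2 * B n/2 = (s n * z n) * z n * B n / 2 := by ring
      rw [Real.norm_eq_abs, e1, abs_div, abs_mul, abs_mul,
        abs_of_nonneg hBnn, (show |(2:ℝ)| = 2 from by norm_num)]
      have c := mul_le_mul hb h2 hBnn (by positivity)
      nlinarith [c, abs_nonneg (z n), abs_nonneg (s n * z n)]
    · have := hz0.abs.const_mul (6 * |θ| * (σS^2+2) / 2)
      simpa using this
  have hc4 : Tendsto (fun n => s n * E n) atTop (nhds 0) := by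
    refine squeeze_zero_norm' ?_ (by have h := hnE.abs; rwa [abs_zero] at h)
    filter_upwards [eventually_ge_atTop 1] with n hn
    rw [Real.norm_eq_abs, abs_mul, abs_of_nonneg (hs_nonneg n)]
    calc s n * |E n| ≤ (n:ℝ)*|E n| :=
          mul_le_mul_of_nonneg_right (hsn_le n hn) (abs_nonneg _)
    _ = |(n:ℝ)*E n| := by rw [abs_mul, abs_of_nonneg (by positivity : (0:ℝ) ≤ (n:ℝ))]
  have hszA : Tendsto (fun n => s n * z n * A n) atTop (nhds (-θ)) := by
    have hsum : Tendsto (fun n => -θ - θ^2/(2*s n) - s n * ρ n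
        + s n * z n^2 * B n/2 + s n * E n) atTop (nhds (-θ - 0 - 0 + 0 + 0)) :=
      (((tendsto_const_nhds.sub hc1).sub hc2).add hc3).add hc4
    have h0 : -θ - 0 - 0 + 0 + 0 = -θ := by ring
    rw [h0] at hsum
    exact Tendsto.congr' (hid1.mono fun _ h => h.symm) hsum
  have hsz : Tendsto (fun n => s n * z n) atTop (nhds (-θ)) := by
    have hdiv := hszA.div hA1 one_ne_zero
    have h0 : -θ/1 = -θ := by norm_num
    rw [h0] at hdiv
    refine Tendsto.congr' ?_ hdiv
    filter_upwards [hA_ev] with n h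
    exact mul_div_cancel_right₀ _ (by linarith)
  have hnz2 : Tendsto (fun n : ℕ => (n:ℝ) * z n^2) atTop (nhds (θ^2)) := by
    have h1 := hsz.mul hsz
    have h2 : -θ * -θ = θ^2 := by ring
    rw [h2] at h1
    refine h1.congr fun n => ?_
    rw [hss n]; ring
  -- main identity and limit
  have hid2 : ∀ᶠ (n:ℕ) in atTop, (n:ℝ) * z n * A n + s n * θ
      = -θ^2/2 - (n:ℝ)*ρ n + (n:ℝ)*z n^2*B n/2 + (n:ℝ)*E n := by
    filter_upwards [eventually_ge_atTop 1] with n hn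
    have h := hEsplit n hn
    have hspos : (0:ℝ) < s n := by linarith [hs_one n hn]
    have hnt : (n:ℝ) * t n = s n * θ := by
      rw [ht_def]; simp only []; rw [hss n]; field_simp
    have hnt2 : (n:ℝ) * t n^2 = θ^2 := by
      rw [ht_def]; simp only []; rw [hss n]; field_simp
    rw [hρ_def]; simp only []
    linear_combination (n:ℝ)*h - hnt - (1/2)*hnt2
  have hY : Tendsto (fun n : ℕ => (n:ℝ)*z n*A n + s n*θ) atTop (nhds (σS^2*θ^2/2)) := by
    have h3 : Tendsto (fun n : ℕ => (n:ℝ)*z n^2*B n/2) atTop (nhds (θ^2*(σS^2+1)/2)) :=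
      (hnz2.mul hBlim).div_const 2
    have hsum := (((tendsto_const_nhds (x := -θ^2/2)).sub hnρ).add h3).add hnE
    have hval : -θ^2/2 - 0 + θ^2*(σS^2+1)/2 + 0 = σS^2*θ^2/2 := by ring
    rw [hval] at hsum
    exact Tendsto.congr' (hid2.mono fun _ h => h.symm) hsum
  have hcross : Tendsto (fun n => (s n * z n) * (s n * (1 - A n))) atTop (nhds 0) := by
    have := hsz.mul hL1
    simpa using this
  have hmain : Tendsto (fun n : ℕ => (n:ℝ)*z n + s n*θ - σS^2*θ^2/2) atTop (nhds 0) := by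
    have hsum := (hY.add hcross).sub_const (σS^2*θ^2/2)
    have hval : σS^2*θ^2/2 + 0 - σS^2*θ^2/2 = 0 := by ring
    rw [hval] at hsum
    refine hsum.congr fun n => ?_
    have h := hss n
    linear_combination (z n * (A n - 1)) * h
  refine Tendsto.congr' ?_ hmain
  filter_upwards [eventually_ge_atTop 1] with n hn
  have hspos : (0:ℝ) < s n := by linarith [hs_one n hn]
  show (n:ℝ)*z n + s n*θ - σS^2*θ^2/2
      = (n:ℝ) * (z n - (-(θ / s n)) - σS^2*θ^2/(2*(n:ℝ)))
  rw [hss n]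
  field_simp
  ring
end

section
/- Let K ≥ 2 and suppose real sequences (B_1⁽ⁿ⁾,…,B_K⁽ⁿ⁾) and (d_1⁽ⁿ⁾,…,d_K⁽ⁿ⁾) satisfy: B_j⁽ⁿ⁾ = ∑_{i=j}^K b_i d_i⁽ⁿ⁾, d_i⁽ⁿ⁾ ≥ 0, ∑_i d_i⁽ⁿ⁾ = 1, and ξ_i B_i⁽ⁿ⁾ = ξ_{i−1} B_{i+1}⁽ⁿ⁾ + o(1) for i = 1,…,K−1, where ξ_0 = 1, ξ_j = ∏_{i≤j} e^{β_i(ℓ_i−ℓ_{i−1})}, β_i = 2b_i/σ_i², σ_i > 0, b_K < 0, 0 = ℓ_0 < ℓ_1 < … < ℓ_{K−1}. Then d_i⁽ⁿ⁾ → d_i := c_i/∑_{j=1}^{K} c_j as n → ∞ for every i, where c_i are defined by c_i = 2σ_i^{−2}(ℓ_{i−1}−ℓ_i)ξ_{i−1} if b_i = 0, c_i = b_i^{−1}(1−e^{β_i(ℓ_i−ℓ_{i−1})})ξ_{i−1} if b_i ≠ 0 (i ≤ K−1), c_K = b_K^{−1}ξ_{K−1}. -/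
open Filter Finset

theorem stmt19 (K : ℕ) (hK : 2 ≤ K) (b σ ℓ : ℕ → ℝ)
    (hbK : b K < 0)
    (hσ : ∀ i, 1 ≤ i → i ≤ K → 0 < σ i)
    (hℓ0 : ℓ 0 = 0)
    (hℓ : ∀ i, 1 ≤ i → i ≤ K - 1 → ℓ (i - 1) < ℓ i)
    (β : ℕ → ℝ) (hβ : ∀ i, β i = 2 * b i / (σ i) ^ 2)
    (ξ : ℕ → ℝ) (hξ0 : ξ 0 = 1)
    (hξ : ∀ j, 1 ≤ j → j ≤ K - 1 →
      ξ j = ∏ i ∈ Finset.Icc 1 j, Real.exp (β i * (ℓ i - ℓ (i - 1))))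
    (c : ℕ → ℝ)
    (hc : ∀ i, 1 ≤ i → i ≤ K - 1 →
      c i = if b i = 0 then 2 / (σ i) ^ 2 * (ℓ (i - 1) - ℓ i) * ξ (i - 1)
            else (1 - Real.exp (β i * (ℓ i - ℓ (i - 1)))) / b i * ξ (i - 1))
    (hcK : c K = ξ (K - 1) / b K)
    (B d : ℕ → ℕ → ℝ)
    (hB : ∀ n : ℕ, ∀ i, 1 ≤ i → i ≤ K →
      B n i = ∑ j ∈ Finset.Icc i K, b j * d n j)
    (hdnn : ∀ n : ℕ, ∀ i, 1 ≤ i → i ≤ K → 0 ≤ d n i)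
    (hdsum : ∀ n : ℕ, ∑ i ∈ Finset.Icc 1 K, d n i = 1)
    (hrec : ∀ i, 1 ≤ i → i ≤ K - 1 →
      Tendsto (fun n : ℕ => ξ i * B n i - ξ (i - 1) * B n (i + 1)) atTop (nhds 0))
    (hdet : ∀ i, 1 ≤ i → i ≤ K - 1 →
      Tendsto (fun n : ℕ => d n i - c i * (ξ i)⁻¹ * B n (i + 1)) atTop (nhds 0)) :
    ∀ i, 1 ≤ i → i ≤ K →
      Tendsto (fun n : ℕ => d n i) atTop
        (nhds (c i / ∑ j ∈ Finset.Icc 1 K, c j)) := by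

  have hξpos : ∀ j, j ≤ K - 1 → 0 < ξ j := by
    intro j hj
    rcases Nat.eq_zero_or_pos j with h0 | h1
    · rw [h0, hξ0]; norm_num
    · rw [hξ j h1 hj]
      exact Finset.prod_pos fun i _ => Real.exp_pos _
  have hξK1 : 0 < ξ (K - 1) := hξpos _ le_rfl
  have hξne : ξ (K - 1) ≠ 0 := ne_of_gt hξK1
  have hbKne : b K ≠ 0 := ne_of_lt hbK
  have hcneg : ∀ i, 1 ≤ i → i ≤ K → c i < 0 := by
    intro i hi1 hiK
    rcases eq_or_lt_of_le hiK with heq | hlt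
    · rw [heq, hcK]; exact div_neg_of_pos_of_neg hξK1 hbK
    · have hiK1 : i ≤ K - 1 := by omega
      have hξi : 0 < ξ (i - 1) := hξpos _ (by omega)
      have hℓi : ℓ (i - 1) < ℓ i := hℓ i hi1 hiK1
      have hσi : 0 < σ i := hσ i hi1 (by omega)
      rw [hc i hi1 hiK1]
      by_cases hb : b i = 0
      · rw [if_pos hb]
        have h2 : 0 < 2 / σ i ^ 2 := by positivity
        exact mul_neg_of_neg_of_pos (mul_neg_of_pos_of_neg h2 (by linarith)) hξi
      · rw [if_neg hb]
        rcases lt_or_gt_of_ne hb with hbneg | hbpos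
        · have hx : β i * (ℓ i - ℓ (i - 1)) < 0 := by
            rw [hβ]
            apply mul_neg_of_neg_of_pos
            · exact div_neg_of_neg_of_pos (by linarith) (by positivity)
            · linarith
          have he : Real.exp (β i * (ℓ i - ℓ (i - 1))) < 1 := Real.exp_lt_one_iff.mpr hx
          apply mul_neg_of_neg_of_pos _ hξi
          exact div_neg_of_pos_of_neg (by linarith) hbneg
        · have hx : 0 < β i * (ℓ i - ℓ (i - 1)) := by
            rw [hβ]
            exact mul_pos (div_pos (by linarith) (by positivity)) (by linarith)
          have he : 1 < Real.exp (β i * (ℓ i - ℓ (i - 1))) := Real.one_lt_exp_iff.mpr hx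
          apply mul_neg_of_neg_of_pos _ hξi
          exact div_neg_of_neg_of_pos (by linarith) hbpos
  set S := ∑ j ∈ Finset.Icc 1 K, c j with hS
  have hSneg : S < 0 :=
    Finset.sum_neg (fun i hi => hcneg i (Finset.mem_Icc.mp hi).1 (Finset.mem_Icc.mp hi).2)
      ⟨1, Finset.mem_Icc.mpr ⟨le_refl 1, by omega⟩⟩
  have hSne : S ≠ 0 := ne_of_lt hSneg
  have key : ∀ m : ℕ, ∀ i, 1 ≤ i → i + m = K - 1 →
      Tendsto (fun n : ℕ => ξ (K - 1) * B n (i + 1) - ξ i * B n K) atTop (nhds 0) := by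
    intro m
    induction m with
    | zero =>
      intro i hi1 heq
      have hieq : i = K - 1 := by omega
      subst hieq
      have hKeq : K - 1 + 1 = K := by omega
      rw [hKeq]
      have : (fun n : ℕ => ξ (K - 1) * B n K - ξ (K - 1) * B n K) = fun _ => (0 : ℝ) := by
        funext n; ring
      rw [this]; exact tendsto_const_nhds
    | succ m ih =>
      intro i hi1 heq
      have hi1K : i + 1 ≤ K - 1 := by omega
      have h1 := hrec (i + 1) (by omega) hi1K
      have h2 := ih (i + 1) (by omega) (by omega)
      have hξi1 : ξ (i + 1) ≠ 0 := ne_of_gt (hξpos _ hi1K)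
      have hcomb := (h1.const_mul (ξ (K - 1) / ξ (i + 1))).add (h2.const_mul (ξ i / ξ (i + 1)))
      simp only [mul_zero, add_zero] at hcomb
      refine hcomb.congr fun n => ?_
      simp only [Nat.add_sub_cancel]
      field_simp
      ring
  have claim : ∀ i, 1 ≤ i → i ≤ K - 1 →
      Tendsto (fun n : ℕ => ξ (K - 1) * B n (i + 1) - ξ i * B n K) atTop (nhds 0) :=
    fun i hi1 hi2 => key (K - 1 - i) i hi1 (by omega)
  have hBK : ∀ n, B n K = b K * d n K := by
    intro n
    rw [hB n K (by omega) le_rfl, Finset.Icc_self, Finset.sum_singleton]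
  have dlim : ∀ i, 1 ≤ i → i ≤ K →
      Tendsto (fun n : ℕ => d n i - c i / ξ (K - 1) * B n K) atTop (nhds 0) := by
    intro i hi1 hiK
    rcases eq_or_lt_of_le hiK with heq | hlt
    · have hfun : ∀ n : ℕ, d n i - c i / ξ (K - 1) * B n K = 0 := by
        intro n
        rw [heq, hBK n, hcK]
        field_simp
        ring
      have : (fun n : ℕ => d n i - c i / ξ (K - 1) * B n K) = fun _ => (0 : ℝ) := funext hfun
      rw [this]; exact tendsto_const_nhds
    · have hiK1 : i ≤ K - 1 := by omega
      have h1 := hdet i hi1 hiK1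
      have h2 := (claim i hi1 hiK1).const_mul (c i * (ξ i)⁻¹ / ξ (K - 1))
      have hξi : ξ i ≠ 0 := ne_of_gt (hξpos _ hiK1)
      have hcomb := h1.add h2
      simp only [mul_zero, add_zero] at hcomb
      refine hcomb.congr fun n => ?_
      field_simp
      ring
  have hsum : Tendsto (fun n : ℕ => 1 - S / ξ (K - 1) * B n K) atTop (nhds 0) := by
    have h := tendsto_finset_sum (Finset.Icc 1 K)
      (fun i hi => dlim i (Finset.mem_Icc.mp hi).1 (Finset.mem_Icc.mp hi).2)
    simp only [Finset.sum_const_zero] at h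
    refine h.congr fun n => ?_
    rw [Finset.sum_sub_distrib, hdsum n, ← Finset.sum_mul, ← Finset.sum_div]
  have hBKlim : Tendsto (fun n : ℕ => B n K) atTop (nhds (ξ (K - 1) / S)) := by
    have h : Tendsto
        (fun n : ℕ => ξ (K - 1) / S - ξ (K - 1) / S * (1 - S / ξ (K - 1) * B n K)) atTop
        (nhds (ξ (K - 1) / S - ξ (K - 1) / S * 0)) :=
      tendsto_const_nhds.sub (hsum.const_mul _)
    simp only [mul_zero, sub_zero] at h
    refine h.congr fun n => ?_
    field_simp
    ring
  intro i hi1 hiK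
  have h := (dlim i hi1 hiK).add (hBKlim.const_mul (c i / ξ (K - 1)))
  simp only [zero_add] at h
  have heq : (fun n : ℕ => d n i - c i / ξ (K - 1) * B n K + c i / ξ (K - 1) * B n K)
      = fun n : ℕ => d n i := by funext n; ring
  rw [heq] at h
  have hval : c i / ξ (K - 1) * (ξ (K - 1) / S) = c i / S := by
    field_simp
  rw [hval] at h
  exact h
end
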